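/- Let y ∈ ℝⁿ be nonzero. Define N(y) = {M : yᵀMu = 0 = uᵀMy for all u ⊥ y} and M(y) = {M : uᵀMv = 0 for all u,v ⊥ y, and yᵀMy = 0}. Then N(y)·N(y) ⊆ N(y), M(y)·M(y) ⊆ N(y), N(y)·M(y) ⊆ M(y), and M(y)·N(y) ⊆ M(y). -/

import Mathlib

open Matrix

lemma span_aux {n : ℕ} (y w : Fin n → ℝ) (hy : y ≠ 0)
    (h : ∀ u : Fin n → ℝ, u ⬝ᵥ y = 0 → u ⬝ᵥ w = 0) :
    ∃ c : ℝ, w = c • y := by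
  have hyy : y ⬝ᵥ y ≠ 0 := fun h0 => hy (dotProduct_self_eq_zero.mp h0)
  set c := (w ⬝ᵥ y) / (y ⬝ᵥ y) with hc
  refine ⟨c, ?_⟩
  have hcy : c * (y ⬝ᵥ y) = w ⬝ᵥ y := by rw [hc]; field_simp
  have hv : (w - c • y) ⬝ᵥ y = 0 := by
    simp [sub_dotProduct, smul_dotProduct, hcy]
  have h1 := h _ hv
  have hvv : (w - c • y) ⬝ᵥ (w - c • y) = 0 := by
    have e : (w - c • y) ⬝ᵥ (w - c • y)
        = (w - c • y) ⬝ᵥ w - c * ((w - c • y) ⬝ᵥ y) := by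
      simp [dotProduct_sub, dotProduct_smul]
    rw [e, h1, hv]; ring
  have h2 : w - c • y = 0 := dotProduct_self_eq_zero.mp hvv
  exact sub_eq_zero.mp h2

theorem stmt_10 (n : ℕ) (y : Fin n → ℝ) (hy : y ≠ 0)
    (N M : Matrix (Fin n) (Fin n) ℝ → Prop)
    (hN : ∀ X, N X ↔ ∀ u : Fin n → ℝ, u ⬝ᵥ y = 0 →
      y ⬝ᵥ X.mulVec u = 0 ∧ u ⬝ᵥ X.mulVec y = 0)
    (hM : ∀ X, M X ↔ (∀ u v : Fin n → ℝ, u ⬝ᵥ y = 0 → v ⬝ᵥ y = 0 →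
      u ⬝ᵥ X.mulVec v = 0) ∧ y ⬝ᵥ X.mulVec y = 0) :
    (∀ X X', N X → N X' → N (X * X')) ∧
    (∀ X X', M X → M X' → N (X * X')) ∧
    (∀ X X', N X → M X' → M (X * X')) ∧
    (∀ X X', M X → N X' → M (X * X')) := by
  have key : ∀ (X : Matrix (Fin n) (Fin n) ℝ) (u : Fin n → ℝ),
      (X.mulVec u) ⬝ᵥ y = y ⬝ᵥ X.mulVec u := fun X u => dotProduct_comm _ _
  refine ⟨?_, ?_, ?_, ?_⟩
  · intro X X' hX hX'
    rw [hN] at hX hX' ⊢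
    intro u hu
    constructor
    · -- y ⬝ X (X' u) = 0 since X'u ⊥ y
      have h1 : (X'.mulVec u) ⬝ᵥ y = 0 := by
        rw [key]; exact (hX' u hu).1
      rw [← mulVec_mulVec]
      exact (hX _ h1).1
    · -- X' y = c • y
      obtain ⟨c, hc⟩ := span_aux y (X'.mulVec y) hy (fun v hv => (hX' v hv).2)
      rw [← mulVec_mulVec, hc, mulVec_smul, dotProduct_smul, (hX u hu).2, smul_zero]
  · intro X X' hX hX'
    rw [hM] at hX hX'
    rw [hN]
    intro u hu
    constructor
    · -- X'u = c • y by span_aux, then y ⬝ X (c y) = c (y⬝Xy) = 0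
      obtain ⟨c, hc⟩ := span_aux y (X'.mulVec u) hy (fun v hv => hX'.1 v u hv hu)
      rw [← mulVec_mulVec, hc, mulVec_smul, dotProduct_smul, hX.2, smul_zero]
    · -- X'y ⊥ y, then u ⬝ X (X'y) = 0
      have h1 : (X'.mulVec y) ⬝ᵥ y = 0 := by rw [key]; exact hX'.2
      rw [← mulVec_mulVec]
      exact hX.1 u _ hu h1
  · intro X X' hX hX'
    rw [hN] at hX
    rw [hM] at hX' ⊢
    constructor
    · intro u v hu hv
      obtain ⟨c, hc⟩ := span_aux y (X'.mulVec v) hy (fun w hw => hX'.1 w v hw hv)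
      rw [← mulVec_mulVec, hc, mulVec_smul, dotProduct_smul, (hX u hu).2, smul_zero]
    · have h1 : (X'.mulVec y) ⬝ᵥ y = 0 := by rw [key]; exact hX'.2
      rw [← mulVec_mulVec]
      exact (hX _ h1).1
  · intro X X' hX hX'
    rw [hM] at hX ⊢
    rw [hN] at hX'
    constructor
    · intro u v hu hv
      have h1 : (X'.mulVec v) ⬝ᵥ y = 0 := by rw [key]; exact (hX' v hv).1
      rw [← mulVec_mulVec]
      exact hX.1 u _ hu h1
    · obtain ⟨c, hc⟩ := span_aux y (X'.mulVec y) hy (fun w hw => (hX' w hw).2)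
      rw [← mulVec_mulVec, hc, mulVec_smul, dotProduct_smul, hX.2, smul_zero]
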